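/- Let G be a finite simple graph with P = (I + D)⁻¹ A. Then the spectral radius of P is strictly less than 1, and consequently (I + L)⁻¹ = (Σ_{k=0}^∞ Pᵏ)(I + D)⁻¹, where L = D - A. -/

import Mathlib

open Matrix

attribute [local instance]
  Matrix.linftyOpNormedRing Matrix.linftyOpNormedAlgebra

theorem dsm_neumann_expansion
    {n : ℕ} (G : SimpleGraph (Fin n)) [DecidableRel G.Adj]
    (P : Matrix (Fin n) (Fin n) ℝ)
    (hP : P = (1 + G.degMatrix ℝ)⁻¹ * G.adjMatrix ℝ) :
    (∀ z ∈ spectrum ℂ (P.map (algebraMap ℝ ℂ)), ‖z‖ < 1) ∧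
    HasSum (fun k : ℕ => P ^ k * (1 + G.degMatrix ℝ)⁻¹) (1 + G.lapMatrix ℝ)⁻¹ := by
  set d : Fin n → ℝ := fun i => 1 + G.degree i with hd
  have hdpos : ∀ i, 0 < d i := fun i => by positivity
  have hD : (1 : Matrix (Fin n) (Fin n) ℝ) + G.degMatrix ℝ = diagonal d := by
    rw [SimpleGraph.degMatrix, ← diagonal_one, diagonal_add]
  have hDinv : (1 + G.degMatrix ℝ)⁻¹ = diagonal (fun i => (d i)⁻¹) := by
    rw [hD]
    refine inv_eq_right_inv ?_
    have : (fun i => d i * (d i)⁻¹) = fun _ => (1:ℝ) :=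
      funext fun i => mul_inv_cancel₀ (hdpos i).ne'
    rw [diagonal_mul_diagonal, this, diagonal_one]
  have hPentry : ∀ i j, P i j = (d i)⁻¹ * G.adjMatrix ℝ i j := by
    intro i j
    rw [hP, hDinv, diagonal_mul]
  have hAnn : ∀ i j, (0:ℝ) ≤ G.adjMatrix ℝ i j := fun i j => by
    by_cases h : G.Adj i j <;> simp [h]
  have hrow : ∀ i, ∑ j, G.adjMatrix ℝ i j = (G.degree i : ℝ) := by
    intro i
    have := SimpleGraph.adjMatrix_mulVec_const_apply (α := ℝ) (G := G) (a := 1) (v := i)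
    simpa [mulVec, dotProduct] using this
  -- norm bound
  have hnorm : ‖P‖₊ < 1 := by
    rw [Matrix.linfty_opNNNorm_def]
    refine Finset.sup_lt_iff (by norm_num) |>.2 fun i _ => ?_
    rw [← NNReal.coe_lt_coe]
    push_cast [coe_nnnorm]
    have hsum : ∑ j, ‖P i j‖ = (d i)⁻¹ * G.degree i := by
      calc ∑ j, ‖P i j‖ = ∑ j, (d i)⁻¹ * G.adjMatrix ℝ i j := by
            refine Finset.sum_congr rfl fun j _ => ?_
            rw [hPentry i j, Real.norm_of_nonneg (mul_nonneg (inv_nonneg.2 (hdpos i).le) (hAnn i j))]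
        _ = (d i)⁻¹ * ∑ j, G.adjMatrix ℝ i j := by rw [Finset.mul_sum]
        _ = (d i)⁻¹ * G.degree i := by rw [hrow]
    rw [hsum, inv_mul_lt_iff₀ (hdpos i), mul_one, hd]
    simp
  have hnormR : ‖P‖ < 1 := by
    rw [← coe_nnnorm P]
    exact_mod_cast hnorm
  -- complex matrix has same norm
  have hmapnorm : ‖P.map (algebraMap ℝ ℂ)‖₊ = ‖P‖₊ := by
    rw [Matrix.linfty_opNNNorm_def, Matrix.linfty_opNNNorm_def]
    congr 1
    funext i
    exact Finset.sum_congr rfl fun j _ => by simp [Matrix.map_apply]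
  constructor
  · intro z hz
    rcases isEmpty_or_nonempty (Fin n) with he | hne
    · have : IsUnit (algebraMap ℂ _ z - P.map (algebraMap ℝ ℂ)) := isUnit_of_subsingleton _
      exact absurd this (spectrum.mem_iff.mp hz)
    · have := spectrum.norm_le_norm_of_mem hz
      calc ‖z‖ = ‖z‖ := rfl
        _ ≤ ‖P.map (algebraMap ℝ ℂ)‖ := this
        _ < 1 := by
            rw [← NNReal.coe_lt_coe] at hnorm
            calc ‖P.map (algebraMap ℝ ℂ)‖ = (‖P‖₊ : ℝ) := by
                  rw [← hmapnorm]; rfl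
              _ < 1 := hnorm
  · have hsum : HasSum (fun k : ℕ => P ^ k) (Ring.inverse (1 - P)) :=
      hasSum_geom_series_inverse P hnormR
    have hdet : (1 + G.degMatrix ℝ).det ≠ 0 := by
      rw [hD, det_diagonal]
      exact Finset.prod_ne_zero_iff.2 fun i _ => (hdpos i).ne'
    have hfact : (1 : Matrix (Fin n) (Fin n) ℝ) + G.lapMatrix ℝ
        = (1 + G.degMatrix ℝ) * (1 - P) := by
      rw [mul_sub, mul_one, hP, ← mul_assoc, mul_nonsing_inv _ hdet.isUnit, one_mul,
        SimpleGraph.lapMatrix]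
      abel
    have hkey : (1 + G.lapMatrix ℝ)⁻¹ = Ring.inverse (1 - P) * (1 + G.degMatrix ℝ)⁻¹ := by
      rw [hfact, Matrix.mul_inv_rev, nonsing_inv_eq_ringInverse]
    rw [hkey]
    exact hsum.mul_right _
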